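/- For the principal part integral, the residue computation holds: Res_{w=0} exp(2πnw + 2πy/(k²w)) = (1/k)·√(y/n)·I₁(4π√(ny)/k), where I₁ is the modified Bessel function of the first kind of order 1. -/

import Mathlib

open scoped Real

/-- The modified Bessel function of the first kind of order 1,
`I₁(z) = ∑_{m≥0} (z/2)^{2m+1}/(m! (m+1)!)`. -/
noncomputable def besselI1 (z : ℝ) : ℝ :=
  ∑' m : ℕ, (z / 2) ^ (2 * m + 1) / ((m.factorial : ℝ) * ((m + 1).factorial : ℝ))

section Aux

open Complex MeasureTheory Metric intervalIntegral


lemma circleIntegral_tsum {ι : Type*} [Countable ι] (f : ι → ℂ → ℂ)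
    (hc : ∀ i, ContinuousOn (f i) (sphere (0:ℂ) 1))
    (C : ι → ℝ) (hC : Summable C)
    (hb : ∀ i, ∀ w ∈ sphere (0:ℂ) 1, ‖f i w‖ ≤ C i) :
    (∮ w in C(0, 1), ∑' i, f i w) = ∑' i, ∮ w in C(0, 1), f i w := by
  have hC0 : ∀ i, 0 ≤ C i := fun i => (norm_nonneg _).trans (hb i 1 (by simp))
  have hmem : ∀ θ : ℝ, circleMap 0 1 θ ∈ sphere (0:ℂ) 1 :=
    fun θ => circleMap_mem_sphere 0 zero_le_one θ
  have hcont : ∀ i, Continuous fun θ : ℝ =>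
      (circleMap 0 1 θ * I) * f i (circleMap 0 1 θ) := by
    intro i
    exact ((continuous_circleMap 0 1).mul continuous_const).mul
      ((hc i).comp_continuous (continuous_circleMap 0 1) hmem)
  simp only [circleIntegral, deriv_circleMap, smul_eq_mul]
  rw [intervalIntegral.integral_of_le Real.two_pi_pos.le]
  simp only [intervalIntegral.integral_of_le Real.two_pi_pos.le]
  have key := MeasureTheory.integral_tsum
    (f := fun i θ => (circleMap 0 1 θ * I) * f i (circleMap 0 1 θ))
    (μ := volume.restrict (Set.Ioc (0:ℝ) (2*Real.pi)))
    (fun i => (hcont i).aestronglyMeasurable)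
    ?_
  · rw [← key]
    congr 1
    ext θ
    rw [tsum_mul_left]
  · have hle : ∀ i, (∫⁻ θ, ‖(circleMap 0 1 θ * I) * f i (circleMap 0 1 θ)‖₊
        ∂(volume.restrict (Set.Ioc (0:ℝ) (2*Real.pi))))
        ≤ ENNReal.ofReal (C i) * ENNReal.ofReal (2*Real.pi) := by
      intro i
      calc ∫⁻ θ, ‖(circleMap 0 1 θ * I) * f i (circleMap 0 1 θ)‖₊
            ∂(volume.restrict (Set.Ioc (0:ℝ) (2*Real.pi)))
          ≤ ∫⁻ _, ENNReal.ofReal (C i)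
            ∂(volume.restrict (Set.Ioc (0:ℝ) (2*Real.pi))) := by
            apply lintegral_mono
            intro θ
            simp only []
            rw [← ENNReal.ofReal_coe_nnreal, coe_nnnorm]
            apply ENNReal.ofReal_le_ofReal
            have h1 : ‖circleMap 0 1 θ * I‖ = 1 := by
              simp [norm_mul, norm_circleMap_zero]
            rw [norm_mul, h1, one_mul]
            exact hb i _ (hmem θ)
        _ = ENNReal.ofReal (C i) * ENNReal.ofReal (2*Real.pi) := by
            rw [lintegral_const, Measure.restrict_apply_univ, Real.volume_Ioc]
            simp [Real.two_pi_pos.le]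
    refine ne_of_lt ?_
    calc ∑' i, (∫⁻ θ, ‖(circleMap 0 1 θ * I) * f i (circleMap 0 1 θ)‖₊
          ∂(volume.restrict (Set.Ioc (0:ℝ) (2*Real.pi))))
        ≤ ∑' i, ENNReal.ofReal (C i) * ENNReal.ofReal (2*Real.pi) :=
          ENNReal.tsum_le_tsum hle
      _ = (∑' i, ENNReal.ofReal (C i)) * ENNReal.ofReal (2*Real.pi) :=
          ENNReal.tsum_mul_right
      _ < ⊤ := by
          refine ENNReal.mul_lt_top ?_ ENNReal.ofReal_lt_top
          rw [← ENNReal.ofReal_tsum_of_nonneg hC0 hC]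
          exact ENNReal.ofReal_lt_top


lemma exp_eq_tsum' (z : ℂ) : Complex.exp z = ∑' n : ℕ, z ^ n / n.factorial := by
  rw [Complex.exp_eq_exp_ℂ, NormedSpace.exp_eq_tsum_div]

lemma circleIntegral_zpow (d : ℤ) :
    (∮ w in C(0, 1), w ^ d) = if d = -1 then 2 * Real.pi * I else 0 := by
  split_ifs with h
  · subst h
    simpa using circleIntegral.integral_sub_inv_of_mem_ball (show (0:ℂ) ∈ ball 0 1 by simp)
  · simpa using circleIntegral.integral_sub_zpow_of_ne h 0 0 1

lemma residue_key (a b : ℂ) :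
    (∮ w in C(0, 1), Complex.exp (a * w + b / w))
      = (2 * Real.pi * I) * ∑' m : ℕ,
          a ^ m * b ^ (m + 1) / ((m.factorial : ℂ) * ((m + 1).factorial : ℂ)) := by
  set F : ℕ × ℕ → ℂ → ℂ := fun p w =>
    (a ^ p.1 / p.1.factorial) * (b ^ p.2 / p.2.factorial) * w ^ ((p.1 : ℤ) - p.2) with hF
  have hsum_a : ∀ z : ℂ, Summable fun n : ℕ => ‖z ^ n / (n.factorial : ℂ)‖ := by
    intro z
    have := Real.summable_pow_div_factorial ‖z‖
    refine this.congr fun n => ?_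
    rw [norm_div, norm_pow]
    simp
  -- pointwise expansion on the circle
  have hpt : ∀ w ∈ sphere (0:ℂ) 1, Complex.exp (a * w + b / w) = ∑' p : ℕ × ℕ, F p w := by
    intro w hw
    have hw0 : w ≠ 0 := by
      intro h; rw [mem_sphere_zero_iff_norm, h] at hw; simp at hw
    rw [Complex.exp_add, exp_eq_tsum' (a * w), exp_eq_tsum' (b / w),
      tsum_mul_tsum_of_summable_norm (hsum_a (a * w)) (hsum_a (b / w))]
    refine tsum_congr fun p => ?_
    rw [hF]
    simp only
    rw [zpow_sub₀ hw0, zpow_natCast, zpow_natCast, mul_pow, div_pow]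
    have hwj : w ^ p.2 ≠ 0 := pow_ne_zero _ hw0
    field_simp
  rw [circleIntegral.integral_congr zero_le_one hpt]
  -- swap sum and integral
  have hb1 : ∀ (p : ℕ × ℕ), ∀ w ∈ sphere (0:ℂ) 1,
      ‖F p w‖ ≤ (‖a‖ ^ p.1 / p.1.factorial) * (‖b‖ ^ p.2 / p.2.factorial) := by
    intro p w hw
    rw [mem_sphere_zero_iff_norm] at hw
    have : ‖w ^ ((p.1 : ℤ) - p.2)‖ = 1 := by
      rw [norm_zpow, hw, one_zpow]
    rw [hF]
    simp only
    rw [norm_mul, norm_mul, this, mul_one, norm_div, norm_div, norm_pow, norm_pow]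
    simp
  have hCsum : Summable fun p : ℕ × ℕ =>
      (‖a‖ ^ p.1 / p.1.factorial) * (‖b‖ ^ p.2 / p.2.factorial) := by
    exact Summable.mul_of_nonneg (f := fun n : ℕ => ‖a‖ ^ n / n.factorial)
      (g := fun n : ℕ => ‖b‖ ^ n / n.factorial)
      (Real.summable_pow_div_factorial ‖a‖) (Real.summable_pow_div_factorial ‖b‖)
      (fun n => by positivity) (fun n => by positivity)
  have hcont : ∀ p : ℕ × ℕ, ContinuousOn (F p) (sphere (0:ℂ) 1) := by
    intro p
    refine ContinuousOn.mul continuousOn_const ?_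
    refine ContinuousOn.zpow₀ continuousOn_id _ fun w hw => Or.inl ?_
    rw [mem_sphere_zero_iff_norm] at hw
    intro h; simp only [id_eq] at h; rw [h] at hw; simp at hw
  rw [circleIntegral_tsum F hcont _ hCsum hb1]
  -- compute each term
  have hterm : ∀ p : ℕ × ℕ, (∮ w in C(0,1), F p w)
      = if p.2 = p.1 + 1 then
          (2 * Real.pi * I) * ((a ^ p.1 / p.1.factorial) * (b ^ p.2 / p.2.factorial))
        else 0 := by
    intro p
    have h2 := circleIntegral.integral_smul (𝕜 := ℂ)
      ((a ^ p.1 / p.1.factorial) * (b ^ p.2 / p.2.factorial))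
      (fun w => w ^ ((p.1 : ℤ) - p.2)) 0 1
    simp only [smul_eq_mul] at h2
    have h3 : (∮ w in C(0,1), F p w)
        = ((a ^ p.1 / p.1.factorial) * (b ^ p.2 / p.2.factorial))
          * ∮ w in C(0,1), w ^ ((p.1 : ℤ) - p.2) := by
      rw [← h2]
    rw [h3, circleIntegral_zpow]
    by_cases h : p.2 = p.1 + 1
    · have : (p.1 : ℤ) - p.2 = -1 := by omega
      rw [this]
      rw [if_pos rfl, if_pos h]
      ring
    · have : (p.1 : ℤ) - p.2 ≠ -1 := by omega
      rw [if_neg this, if_neg h, mul_zero]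
  calc ∑' p : ℕ × ℕ, (∮ w in C(0,1), F p w)
      = ∑' p : ℕ × ℕ, (if p.2 = p.1 + 1 then
          (2 * Real.pi * I) * ((a ^ p.1 / p.1.factorial) * (b ^ p.2 / p.2.factorial))
        else 0) := tsum_congr hterm
    _ = ∑' (j : ℕ) (m : ℕ), (if m = j + 1 then
          (2 * Real.pi * I) * ((a ^ j / j.factorial) * (b ^ m / m.factorial))
        else 0) := by
        refine Summable.tsum_prod' ?_ fun j => ?_
        · refine Summable.of_norm_bounded
            (g := fun p : ℕ × ℕ => 2 * Real.pi *
              ((‖a‖ ^ p.1 / p.1.factorial) * (‖b‖ ^ p.2 / p.2.factorial)))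
            (hCsum.mul_left (2 * Real.pi)) ?_
          intro p
          split_ifs with h
          · have h1 : ‖(2 * (Real.pi:ℂ) * I)‖ = 2 * Real.pi := by
              simp [norm_mul, _root_.abs_of_nonneg Real.pi_pos.le]
            refine le_of_eq ?_
            rw [norm_mul, h1]
            congr 1
            rw [norm_mul, norm_div, norm_div, norm_pow, norm_pow]
            simp
          · simp only [norm_zero]
            positivity
        · apply summable_of_ne_finset_zero (s := {j+1})
          intro m hm
          rw [Finset.mem_singleton] at hm
          rw [if_neg hm]
    _ = ∑' j : ℕ, (2 * Real.pi * I) * (a ^ j * b ^ (j+1)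
          / ((j.factorial : ℂ) * ((j+1).factorial : ℂ))) := by
        refine tsum_congr fun j => ?_
        have : ∀ m : ℕ, (if m = j + 1 then
            (2 * Real.pi * I) * ((a ^ j / j.factorial) * (b ^ m / m.factorial))
          else 0) = (if m = j + 1 then
            (2 * Real.pi * I) * (a ^ j * b ^ (j+1)
              / ((j.factorial : ℂ) * ((j+1).factorial : ℂ))) else 0) := by
          intro m
          split_ifs with h
          · subst h; ring
          · rfl
        rw [tsum_congr this, tsum_ite_eq]
    _ = (2 * Real.pi * I) * ∑' m : ℕ,
          a ^ m * b ^ (m + 1) / ((m.factorial : ℂ) * ((m + 1).factorial : ℂ)) :=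
        tsum_mul_left

end Aux

open Complex Metric in
/-- The residue at `w = 0` of `exp(2πnw + 2πy/(k²w))` (computed as a circle integral)
equals `(1/k)·√(y/n)·I₁(4π√(ny)/k)`. -/
theorem residue_exp_eq_besselI1 (n k : ℕ) (hn : 0 < n) (hk : 0 < k) (y : ℝ) (hy : 0 < y) :
    (2 * (Real.pi : ℂ) * Complex.I)⁻¹
        * (∮ w in C(0, 1), Complex.exp (2 * (Real.pi : ℂ) * n * w
            + 2 * (Real.pi : ℂ) * (y : ℂ) / ((k : ℂ) ^ 2 * w)))
      = ((1 / (k : ℝ)) * Real.sqrt (y / n)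
          * besselI1 (4 * Real.pi * Real.sqrt ((n : ℝ) * y) / k) : ℝ) := by
  have hk0 : (k : ℝ) ≠ 0 := Nat.cast_ne_zero.mpr hk.ne'
  have hn0 : (n : ℝ) ≠ 0 := Nat.cast_ne_zero.mpr hn.ne'
  set a : ℂ := ((2 * Real.pi * n : ℝ) : ℂ) with ha
  set b : ℂ := ((2 * Real.pi * y / k ^ 2 : ℝ) : ℂ) with hb
  have hinteg : (∮ w in C(0, 1), Complex.exp (2 * (Real.pi : ℂ) * n * w
      + 2 * (Real.pi : ℂ) * (y : ℂ) / ((k : ℂ) ^ 2 * w)))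
      = ∮ w in C(0, 1), Complex.exp (a * w + b / w) := by
    refine circleIntegral.integral_congr zero_le_one fun w _ => ?_
    congr 1
    rw [ha, hb]
    push_cast
    rw [← div_div]
  rw [hinteg, residue_key a b, inv_mul_cancel_left₀ (by
    simp [Real.pi_ne_zero, Complex.I_ne_zero, Complex.ext_iff])]
  -- reduce to a real identity
  have hcast : ∑' m : ℕ, a ^ m * b ^ (m + 1) / ((m.factorial : ℂ) * ((m + 1).factorial : ℂ))
      = (((∑' m : ℕ, (2 * Real.pi * n) ^ m * (2 * Real.pi * y / k ^ 2) ^ (m + 1)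
          / ((m.factorial : ℝ) * ((m + 1).factorial : ℝ))) : ℝ) : ℂ) := by
    rw [Complex.ofReal_tsum]
    refine tsum_congr fun m => ?_
    rw [ha, hb]
    push_cast
    ring
  rw [hcast]
  congr 1
  -- the real identity
  set z2 : ℝ := 2 * Real.pi * Real.sqrt (n * y) / k with hz2
  have hzhalf : 4 * Real.pi * Real.sqrt ((n:ℝ) * y) / k / 2 = z2 := by rw [hz2]; ring
  rw [besselI1, hzhalf, ← tsum_mul_left]
  refine tsum_congr fun m => ?_
  set P : ℝ := 2 * Real.pi * n with hP
  set Q : ℝ := 2 * Real.pi * y / (k:ℝ) ^ 2 with hQ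
  have e1 : z2 ^ (2 * m + 1) = (z2 ^ 2) ^ m * z2 := by rw [pow_add, pow_mul, pow_one]
  have e2 : z2 ^ 2 = P * Q := by
    rw [hz2, hP, hQ, div_pow, mul_pow, mul_pow, Real.sq_sqrt (by positivity)]
    ring
  have h4 : Real.sqrt (y / n) * Real.sqrt ((n:ℝ) * y) = y := by
    rw [← Real.sqrt_mul (by positivity)]
    have hyy : y / (n:ℝ) * ((n:ℝ) * y) = y ^ 2 := by field_simp
    rw [hyy, Real.sqrt_sq hy.le]
  have e3 : 1 / (k:ℝ) * Real.sqrt (y / n) * z2 = Q := by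
    rw [hz2, hQ]
    linear_combination (2 * Real.pi / (k:ℝ) ^ 2) * h4
  clear_value P Q z2
  rw [e1, e2]
  linear_combination (-(P * Q) ^ m
    / ((m.factorial : ℝ) * ((m + 1).factorial : ℝ))) * e3
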